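/- Let 1 < q < 2 and let g = h_q⁻¹ be the inverse of h_q(x) = x + |x|^(q-1)·sgn(x). Then g(x) ≤ x^(1/(q-1)) for all x > 0, and there exists a constant D_q > 0 such that for all x₁ > 0 and |x₂| ≤ x₁ with x₂ ≠ x₁, (g(x₁) - g(x₂))/(x₁ - x₂) ≤ x₁^((2-q)/(q-1))/D_q. -/

import Mathlib

open Real Filter

private lemma stmt4_f_pos {q x : ℝ} (hx : 0 < x) :
    |x| ^ (q - 1) * Real.sign x = x ^ (q - 1) := by
  rw [Real.sign_of_pos hx, abs_of_pos hx, mul_one]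

private lemma stmt4_f_neg {q x : ℝ} (hx : x < 0) :
    |x| ^ (q - 1) * Real.sign x = -((-x) ^ (q - 1)) := by
  rw [Real.sign_of_neg hx, abs_of_neg hx, mul_neg_one]

private lemma stmt4_f_zero (q : ℝ) : |(0:ℝ)| ^ (q - 1) * Real.sign 0 = 0 := by
  simp [Real.sign_zero]

private lemma stmt4_f_mono {q : ℝ} (hq : 1 < q) :
    Monotone (fun x : ℝ => |x| ^ (q - 1) * Real.sign x) := by
  have hq1 : (0:ℝ) ≤ q - 1 := by linarith
  intro s t hst
  dsimp only
  rcases lt_trichotomy s 0 with hs | hs | hs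
  · rcases lt_trichotomy t 0 with ht | ht | ht
    · simp only [stmt4_f_neg hs, stmt4_f_neg ht, neg_le_neg_iff]
      exact Real.rpow_le_rpow (by linarith) (by linarith) hq1
    · subst ht
      rw [stmt4_f_neg hs, stmt4_f_zero]
      simpa using Real.rpow_nonneg (by linarith : (0:ℝ) ≤ -s) (q-1)
    · rw [stmt4_f_neg hs, stmt4_f_pos ht]
      have h1 : (0:ℝ) ≤ (-s) ^ (q-1) := Real.rpow_nonneg (by linarith) _
      have h2 : (0:ℝ) ≤ t ^ (q-1) := Real.rpow_nonneg ht.le _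
      linarith
  · subst hs
    rw [stmt4_f_zero]
    have ht : 0 ≤ t := hst
    rcases ht.lt_or_eq with ht | ht
    · rw [stmt4_f_pos ht]; exact Real.rpow_nonneg ht.le _
    · rw [← ht, stmt4_f_zero]
  · have ht : 0 < t := lt_of_lt_of_le hs hst
    rw [stmt4_f_pos hs, stmt4_f_pos ht]
    exact Real.rpow_le_rpow hs.le hst hq1

private lemma stmt4_f_cont {q : ℝ} (hq : 1 < q) :
    Continuous (fun x : ℝ => |x| ^ (q - 1) * Real.sign x) := by
  have hq1 : (0:ℝ) < q - 1 := by linarith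
  rw [continuous_iff_continuousAt]
  intro x
  rcases lt_trichotomy x 0 with hx | hx | hx
  · have : ContinuousAt (fun x : ℝ => -((-x) ^ (q - 1))) x := by
      apply ContinuousAt.neg
      exact ((continuous_neg.continuousAt).rpow_const (Or.inr hq1.le))
    refine this.congr ?_
    filter_upwards [eventually_lt_nhds hx] with y hy
    rw [stmt4_f_neg hy]
  · subst hx
    have habs : Tendsto (fun y : ℝ => |y| ^ (q-1)) (nhds 0) (nhds 0) := by
      have : ContinuousAt (fun y : ℝ => |y| ^ (q-1)) 0 :=
        (continuous_abs.continuousAt).rpow_const (Or.inr hq1.le)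
      simpa [Real.zero_rpow hq1.ne'] using this.tendsto
    have : Tendsto (fun y : ℝ => |y| ^ (q - 1) * Real.sign y) (nhds 0) (nhds 0) := by
      apply squeeze_zero_norm _ habs
      intro y
      rw [Real.norm_eq_abs, abs_mul, abs_of_nonneg (Real.rpow_nonneg (abs_nonneg y) _)]
      rcases lt_trichotomy y 0 with hy | hy | hy
      · rw [Real.sign_of_neg hy]; simp
      · subst hy
        rw [Real.sign_zero, abs_zero, mul_zero]
        positivity
      · rw [Real.sign_of_pos hy]; simp
    unfold ContinuousAt
    simpa [stmt4_f_zero] using this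
  · have : ContinuousAt (fun x : ℝ => x ^ (q - 1)) x :=
      continuousAt_id.rpow_const (Or.inr hq1.le)
    refine this.congr ?_
    filter_upwards [eventually_gt_nhds hx] with y hy
    rw [stmt4_f_pos hy]

theorem stmt_4 (q : ℝ) (hq : 1 < q) (hq2 : q < 2) :
    letI g := Function.invFun (fun x : ℝ => x + |x| ^ (q - 1) * Real.sign x)
    (∀ x : ℝ, 0 < x → g x ≤ x ^ (1 / (q - 1))) ∧
    ∃ D : ℝ, 0 < D ∧
      ∀ x₁ x₂ : ℝ, 0 < x₁ → |x₂| ≤ x₁ → x₂ ≠ x₁ →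
        (g x₁ - g x₂) / (x₁ - x₂) ≤ x₁ ^ ((2 - q) / (q - 1)) / D := by
  set h : ℝ → ℝ := fun x : ℝ => x + |x| ^ (q - 1) * Real.sign x with hh
  set g : ℝ → ℝ := Function.invFun h with hg
  have hq1 : (0:ℝ) < q - 1 := by linarith
  have hmono : StrictMono h := strictMono_id.add_monotone (stmt4_f_mono hq)
  have hcont : Continuous h := continuous_id.add (stmt4_f_cont hq)
  have htop : Tendsto h atTop atTop := by
    apply tendsto_atTop_mono' _ _ tendsto_id
    filter_upwards [eventually_ge_atTop (0:ℝ)] with x hx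
    have : 0 ≤ |x| ^ (q-1) * Real.sign x := by
      have := stmt4_f_mono hq hx
      simpa [stmt4_f_zero] using this
    simp only [hh, id]; linarith
  have hbot : Tendsto h atBot atBot := by
    apply tendsto_atBot_mono' _ _ tendsto_id
    filter_upwards [eventually_le_atBot (0:ℝ)] with x hx
    have : |x| ^ (q-1) * Real.sign x ≤ 0 := by
      have := stmt4_f_mono hq hx
      simpa [stmt4_f_zero] using this
    simp only [hh, id]; linarith
  have hsurj : Function.Surjective h := hcont.surjective htop hbot
  have hginv : ∀ x, h (g x) = x := fun x => Function.invFun_eq (hsurj x)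
  have hgmono : ∀ {x y : ℝ}, x ≤ y → g x ≤ g y := by
    intro x y hxy
    by_contra hc
    push_neg at hc
    have := hmono hc
    rw [hginv, hginv] at this
    linarith
  have hodd : ∀ x : ℝ, h (-x) = -h x := by
    intro x
    simp only [hh]
    rcases lt_trichotomy x 0 with hx | hx | hx
    · rw [stmt4_f_neg hx, stmt4_f_pos (by linarith : (0:ℝ) < -x)]
      ring
    · subst hx; simp [stmt4_f_zero]
    · rw [stmt4_f_pos hx, stmt4_f_neg (by linarith : -x < 0)]
      ring
  have hzero : h 0 = 0 := by simp [hh, stmt4_f_zero]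
  -- Part 1
  have part1 : ∀ x : ℝ, 0 < x → g x ≤ x ^ (1 / (q - 1)) := by
    intro x hx
    set y := x ^ (1 / (q - 1)) with hy
    have hy0 : 0 < y := Real.rpow_pos_of_pos hx _
    have hhy : h y = y + x := by
      show y + |y| ^ (q - 1) * Real.sign y = y + x
      rw [stmt4_f_pos hy0, hy, ← Real.rpow_mul hx.le, one_div_mul_cancel hq1.ne',
        Real.rpow_one]
    have : x ≤ h y := by rw [hhy]; linarith
    calc g x ≤ g (h y) := hgmono this
      _ = y := Function.leftInverse_invFun hmono.injective y
  refine ⟨part1, ⟨q - 1, hq1, ?_⟩⟩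
  intro x₁ x₂ hx₁ habs hne
  set a := g x₁ with ha
  set b := g x₂ with hb
  have hha : h a = x₁ := hginv x₁
  have hhb : h b = x₂ := hginv x₂
  have ha0 : 0 < a := by
    by_contra hc
    push_neg at hc
    have := hmono.monotone hc
    rw [hha, hzero] at this
    linarith
  have hx2lt : x₂ < x₁ := lt_of_le_of_ne (le_of_abs_le habs) hne
  have hblea : b ≤ a := hgmono hx2lt.le
  have hbge : -a ≤ b := by
    have h1 : h (-a) ≤ h b := by
      rw [hodd, hha, hhb]
      have : -x₁ ≤ x₂ := neg_le_of_abs_le habs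
      linarith
    by_contra hc
    push_neg at hc
    exact absurd (hmono hc) (not_lt.mpr h1)
  have hblt : b < a := by
    rcases hblea.lt_or_eq with h | h
    · exact h
    · exfalso; apply hne; rw [← hhb, ← hha, h]
  -- key inequality : f a - f b ≥ (q-1) a^(q-2) (a - b)
  have haq2 : (0:ℝ) < a ^ (q - 2) := Real.rpow_pos_of_pos ha0 _
  have key : (q - 1) * a ^ (q - 2) * (a - b) ≤
      |a| ^ (q - 1) * Real.sign a - |b| ^ (q - 1) * Real.sign b := by
    rw [stmt4_f_pos ha0]
    have haq1 : a ^ (q - 1) = a ^ (q - 2) * a := by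
      rw [← Real.rpow_add_one ha0.ne' (q-2)]; ring_nf
    rcases lt_trichotomy b 0 with hbneg | hb0 | hbpos
    · rw [stmt4_f_neg hbneg]
      set c := -b with hc
      have hc0 : 0 < c := by simp [hc]; linarith
      have hca : c ≤ a := by simp [hc]; linarith
      have h1 : (q - 1) * a ^ (q - 1) ≤ a ^ (q - 1) := by
        nlinarith [Real.rpow_pos_of_pos ha0 (q-1)]
      have h2 : (q - 1) * (a ^ (q - 2) * c) ≤ c ^ (q - 1) := by
        have hc2 : a ^ (q - 2) ≤ c ^ (q - 2) :=
          Real.rpow_le_rpow_of_nonpos hc0 hca (by linarith)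
        have : a ^ (q-2) * c ≤ c ^ (q-2) * c :=
          mul_le_mul_of_nonneg_right hc2 hc0.le
        have hcc : c ^ (q - 2) * c = c ^ (q - 1) := by
          rw [← Real.rpow_add_one hc0.ne' (q-2)]; ring_nf
        have hpos : 0 ≤ a ^ (q - 2) * c := by positivity
        calc (q - 1) * (a ^ (q - 2) * c) ≤ 1 * (a ^ (q - 2) * c) :=
              mul_le_mul_of_nonneg_right (by linarith) hpos
          _ = a ^ (q - 2) * c := one_mul _
          _ ≤ c ^ (q - 2) * c := this
          _ = c ^ (q - 1) := hcc
      calc (q - 1) * a ^ (q - 2) * (a - b)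
          = (q-1) * a^(q-2) * a + (q-1) * (a^(q-2) * c) := by rw [hc]; ring
        _ = (q-1) * a^(q-1) + (q-1) * (a^(q-2) * c) := by rw [haq1]; ring_nf
        _ ≤ a ^ (q-1) + c ^ (q-1) := by linarith
        _ = a ^ (q - 1) - -(c ^ (q-1)) := by ring
    · rw [hb0, stmt4_f_zero, sub_zero, sub_zero, haq1]
      nlinarith [mul_pos haq2 ha0]
    · rw [stmt4_f_pos hbpos]
      -- Bernoulli: (b/a)^(q-1) = (1 + s)^(q-1) ≤ 1 + (q-1) s  with s = b/a - 1
      have hs : -1 ≤ b / a - 1 := by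
        have : 0 ≤ b / a := div_nonneg hbpos.le ha0.le
        linarith
      have hber := rpow_one_add_le_one_add_mul_self hs (by linarith : (0:ℝ) ≤ q - 1)
        (by linarith : q - 1 ≤ 1)
      rw [show (1 : ℝ) + (b / a - 1) = b / a by ring] at hber
      have hdiv : (b / a) ^ (q - 1) = b ^ (q-1) / a ^ (q-1) := by
        rw [Real.div_rpow hbpos.le ha0.le]
      rw [hdiv] at hber
      have hap : (0:ℝ) < a ^ (q-1) := Real.rpow_pos_of_pos ha0 _
      have hb' : b ^ (q-1) ≤ a ^ (q-1) * (1 + (q-1) * (b/a - 1)) := by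
        rw [div_le_iff₀ hap] at hber
        linarith [hber]
      have hexp : a ^ (q-1) * (1 + (q-1) * (b/a - 1))
          = a ^ (q-1) + (q-1) * (a ^ (q-2) * b - a ^ (q-1)) := by
        have : a ^ (q-1) * (b / a) = a ^ (q-2) * b := by
          rw [mul_div_assoc', mul_comm, mul_div_assoc, haq1]
          field_simp
        nlinarith [this]
      rw [hexp] at hb'
      rw [haq1] at hb' ⊢
      nlinarith
  -- conclude
  have hden : (q - 1) * a ^ (q - 2) * (a - b) ≤ x₁ - x₂ := by
    have : x₁ - x₂ = (a - b) + (|a| ^ (q - 1) * Real.sign a - |b| ^ (q - 1) * Real.sign b) := by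
      rw [← hha, ← hhb]; show _ = _ + (_ - _); ring
    rw [this]
    linarith
  have hab : 0 < a - b := by linarith
  have hxx : 0 < x₁ - x₂ := by linarith
  have hdpos : 0 < (q - 1) * a ^ (q - 2) * (a - b) := by positivity
  have step1 : (a - b) / (x₁ - x₂) ≤ a ^ (2 - q) / (q - 1) := by
    have h1 : (a - b) / (x₁ - x₂) ≤ (a - b) / ((q - 1) * a ^ (q - 2) * (a - b)) :=
      div_le_div_of_nonneg_left hab.le hdpos hden
    have h2 : (a - b) / ((q - 1) * a ^ (q - 2) * (a - b)) = a ^ (2 - q) / (q - 1) := by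
      rw [show (2 : ℝ) - q = -(q - 2) by ring, Real.rpow_neg ha0.le]
      field_simp
    rw [h2] at h1
    exact h1
  have step2 : a ^ (2 - q) / (q - 1) ≤ x₁ ^ ((2 - q) / (q - 1)) / (q - 1) := by
    apply div_le_div_of_nonneg_right _ hq1.le
    have h3 : a ^ (2 - q) ≤ (x₁ ^ (1 / (q - 1))) ^ (2 - q) :=
      Real.rpow_le_rpow ha0.le (part1 x₁ hx₁) (by linarith)
    have h4 : (x₁ ^ (1 / (q - 1))) ^ (2 - q) = x₁ ^ ((2 - q) / (q - 1)) := by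
      rw [← Real.rpow_mul hx₁.le]
      congr 1
      ring
    rw [← h4]
    exact h3
  calc (g x₁ - g x₂) / (x₁ - x₂) = (a - b) / (x₁ - x₂) := rfl
    _ ≤ a ^ (2 - q) / (q - 1) := step1
    _ ≤ x₁ ^ ((2 - q) / (q - 1)) / (q - 1) := step2
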